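/- If c < v, then every root of the characteristic polynomial of the Jacobian matrix J(1,0,0) of the reduced replicator vector field at the equilibrium P₅ = (1,0,0) is a negative real number; explicitly, the eigenvalues (c−v)/2 and (c−v)/4 (the latter with multiplicity two) are negative. Moreover, for all real v and c the three eigenvalues of J(1,0,0) all have the same sign, so P₅ is never a saddle point. -/

import Mathlib

open Polynomial

noncomputable section

/-- The reduced replicator vector field of the asymmetric Hawk-Dove game. -/
def F (v c : ℝ) (p : Fin 3 → ℝ) : Fin 3 → ℝ :=
  ![ (1/4) * p 0 * (c * (2*(p 0)^2 + 2*(p 0)*(p 1 + p 2 - 1) + 2*(p 1)*(p 2) - p 1 - p 2)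
        - v * (2*(p 0) + p 1 + p 2 - 2)),
     -(1/4) * p 1 * (v * (2*(p 0) + p 1 + p 2 - 1) - c * (2*(p 0) + 2*(p 1) - 1) * (p 0 + p 2)),
     -(1/4) * p 2 * (v * (2*(p 0) + p 1 + p 2 - 1) - c * (p 0 + p 1) * (2*(p 0) + 2*(p 2) - 1)) ]

/-- The Jacobian matrix of `F v c` at `p`: the matrix of the Fréchet derivative
with respect to the standard basis. -/
def J (v c : ℝ) (p : Fin 3 → ℝ) : Matrix (Fin 3) (Fin 3) ℝ :=
  Matrix.of fun i j => fderiv ℝ (F v c) p (Pi.single j 1) i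

local notation "π" i => ContinuousLinearMap.proj (R := ℝ) (φ := fun _ : Fin 3 => ℝ) i

set_option maxHeartbeats 1000000 in
theorem Jval (v c : ℝ) : J v c ![1, 0, 0] =
    !![(c-v)/2, (c-v)/4, (c-v)/4; 0, (c-v)/4, 0; 0, 0, (c-v)/4] := by
  have hx : HasFDerivAt (fun p : Fin 3 → ℝ => p 0) (π 0) ![1,0,0] := (π 0).hasFDerivAt
  have hy : HasFDerivAt (fun p : Fin 3 → ℝ => p 1) (π 1) ![1,0,0] := (π 1).hasFDerivAt
  have hz : HasFDerivAt (fun p : Fin 3 → ℝ => p 2) (π 2) ![1,0,0] := (π 2).hasFDerivAt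
  have hxsq : HasFDerivAt (fun p : Fin 3 → ℝ => (p 0)^2)
      (((![1,0,0] : Fin 3 → ℝ) 0) • (π 0) + ((![1,0,0] : Fin 3 → ℝ) 0) • (π 0)) ![1,0,0] := by
    have h := hx.mul hx; simp only [pow_two]; exact h
  -- component 0
  have hB := (((hxsq.const_mul (2:ℝ)).add ((hx.const_mul (2:ℝ)).mul ((hy.add hz).sub_const 1))).add
      ((hy.const_mul (2:ℝ)).mul hz)).sub hy |>.sub hz
  have hA := (hB.const_mul c).sub (((((hx.const_mul (2:ℝ)).add hy).add hz).sub_const 2).const_mul v)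
  have hph0 := (hx.const_mul (1/4 : ℝ)).mul hA
  -- component 1
  have hh1 := (((((hx.const_mul (2:ℝ)).add hy).add hz).sub_const 1).const_mul v).sub
      (((((hx.const_mul (2:ℝ)).add (hy.const_mul (2:ℝ))).sub_const 1).const_mul c).mul (hx.add hz))
  have hph1 := (hy.const_mul (-(1/4) : ℝ)).mul hh1
  -- component 2
  have hh2 := (((((hx.const_mul (2:ℝ)).add hy).add hz).sub_const 1).const_mul v).sub
      (((hx.add hy).const_mul c).mul (((hx.const_mul (2:ℝ)).add (hz.const_mul (2:ℝ))).sub_const 1))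
  have hph2 := (hz.const_mul (-(1/4) : ℝ)).mul hh2
  obtain ⟨D0, hD0, hD0v⟩ : ∃ D : (Fin 3 → ℝ) →L[ℝ] ℝ,
      HasFDerivAt (fun p : Fin 3 → ℝ =>
        (1/4) * p 0 * (c * (2*(p 0)^2 + 2*(p 0)*(p 1 + p 2 - 1) + 2*(p 1)*(p 2) - p 1 - p 2)
          - v * (2*(p 0) + p 1 + p 2 - 2))) D ![1,0,0] ∧
      ∀ j : Fin 3, D (Pi.single j 1) = ![(c-v)/2, (c-v)/4, (c-v)/4] j :=
    ⟨_, hph0, by intro j; fin_cases j <;> simp [Pi.single_apply] <;> ring⟩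
  obtain ⟨D1, hD1, hD1v⟩ : ∃ D : (Fin 3 → ℝ) →L[ℝ] ℝ,
      HasFDerivAt (fun p : Fin 3 → ℝ =>
        -(1/4) * p 1 * (v * (2*(p 0) + p 1 + p 2 - 1)
          - c * (2*(p 0) + 2*(p 1) - 1) * (p 0 + p 2))) D ![1,0,0] ∧
      ∀ j : Fin 3, D (Pi.single j 1) = ![0, (c-v)/4, 0] j :=
    ⟨_, hph1, by intro j; fin_cases j <;> simp [Pi.single_apply] <;> ring⟩
  obtain ⟨D2, hD2, hD2v⟩ : ∃ D : (Fin 3 → ℝ) →L[ℝ] ℝ,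
      HasFDerivAt (fun p : Fin 3 → ℝ =>
        -(1/4) * p 2 * (v * (2*(p 0) + p 1 + p 2 - 1)
          - c * (p 0 + p 1) * (2*(p 0) + 2*(p 2) - 1))) D ![1,0,0] ∧
      ∀ j : Fin 3, D (Pi.single j 1) = ![0, 0, (c-v)/4] j :=
    ⟨_, hph2, by intro j; fin_cases j <;> simp [Pi.single_apply] <;> ring⟩
  have hF : HasFDerivAt (F v c) (ContinuousLinearMap.pi ![D0, D1, D2]) ![1,0,0] := by
    apply hasFDerivAt_pi''
    intro i
    fin_cases i
    · simpa [F, ContinuousLinearMap.proj_pi] using hD0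
    · simpa [F, ContinuousLinearMap.proj_pi] using hD1
    · simpa [F, ContinuousLinearMap.proj_pi] using hD2
  have hfd : fderiv ℝ (F v c) ![1,0,0] = ContinuousLinearMap.pi ![D0, D1, D2] := hF.fderiv
  ext i j
  simp only [J, Matrix.of_apply, hfd, ContinuousLinearMap.pi_apply]
  fin_cases i
  exacts [hD0v j, hD1v j, hD2v j]

set_option maxHeartbeats 1000000 in
theorem charpoly_val (v c : ℝ) : (J v c ![1, 0, 0]).charpoly =
    (X - C ((c-v)/2)) * (X - C ((c-v)/4))^2 := by
  rw [Jval, Matrix.charpoly, Matrix.det_fin_three]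
  simp [Matrix.charmatrix_apply_eq, Matrix.charmatrix_apply_ne, Matrix.vecHead, Matrix.vecTail]
  ring

theorem P5_stable_node_never_saddle (v c : ℝ) :
    (c < v →
      ((c - v)/2 < 0 ∧ (c - v)/4 < 0) ∧
      ∀ μ : ℂ, aeval μ ((J v c ![1, 0, 0]).charpoly) = 0 →
        ∃ r : ℝ, μ = (r : ℂ) ∧ r < 0) ∧
    ¬ ∃ μ₁ μ₂ : ℝ, (J v c ![1, 0, 0]).charpoly.IsRoot μ₁ ∧
      (J v c ![1, 0, 0]).charpoly.IsRoot μ₂ ∧ μ₁ < 0 ∧ 0 < μ₂ := by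
  have key : ∀ μ : ℝ, (J v c ![1, 0, 0]).charpoly.IsRoot μ →
      μ = (c - v)/2 ∨ μ = (c - v)/4 := by
    intro μ h
    rw [Polynomial.IsRoot, charpoly_val] at h
    simp only [eval_mul, eval_pow, eval_sub, eval_X, eval_C, mul_eq_zero,
      pow_eq_zero_iff, sub_eq_zero, two_ne_zero, ne_eq, OfNat.ofNat_ne_zero,
      not_false_eq_true] at h
    exact h
  constructor
  · intro hcv
    refine ⟨⟨by linarith, by linarith⟩, ?_⟩
    intro μ hμ
    rw [charpoly_val] at hμ
    simp only [map_mul, map_sub, map_pow, aeval_X, aeval_C, Complex.coe_algebraMap,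
      mul_eq_zero, pow_eq_zero_iff, sub_eq_zero, two_ne_zero, ne_eq, OfNat.ofNat_ne_zero,
      not_false_eq_true] at hμ
    rcases hμ with h | h
    · exact ⟨(c - v)/2, h, by linarith⟩
    · exact ⟨(c - v)/4, h, by linarith⟩
  · rintro ⟨μ₁, μ₂, h1, h2, hneg, hpos⟩
    rcases key μ₁ h1 with h | h <;> rcases key μ₂ h2 with h' | h' <;> linarith
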